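/- Let T be a nonempty well-founded tree on ℕ. Then the tree T^∞ is well-founded, its rank equals the rank of T, and there exists an injection f : T → T^∞ that maps the empty sequence to the empty sequence, preserves lengths of sequences, preserves the proper-prefix relation, preserves rank (rank_{T^∞}(f(σ)) = rank_T(σ) for all σ ∈ T), and preserves the Kleene–Brouwer order (σ <_KB τ implies f(σ) <_KB f(τ)). In particular, the Kleene–Brouwer order of T order-embeds into the Kleene–Brouwer order of T^∞. -/

import Mathlib

/-- A tree: a set of finite lists containing the empty list and closed under prefixes. -/
def IsTree {α : Type*} (T : Set (List α)) : Prop :=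
  [] ∈ T ∧ ∀ ⦃σ τ : List α⦄, σ <+: τ → τ ∈ T → σ ∈ T

/-- `T` has an infinite path: an infinite sequence all of whose finite initial
segments belong to `T`. -/
def HasInfPath {α : Type*} (T : Set (List α)) : Prop :=
  ∃ f : ℕ → α, ∀ k : ℕ, (List.range k).map f ∈ T

/-- The relation "τ properly extends σ" on a tree `T`. -/
def extRel {α : Type*} (T : Set (List α)) : T → T → Prop :=
  fun τ σ => σ.val <+: τ.val ∧ σ.val ≠ τ.val

/-- The rank of a node of a well-founded tree with respect to proper extension. -/
noncomputable def treeRank {α : Type*} (T : Set (List α))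
    (hwf : WellFounded (extRel T)) (σ : T) : Ordinal :=
  @IsWellFounded.rank _ (extRel T) ⟨hwf⟩ σ

/-- The Kleene–Brouwer order induced by a relation `r` on the alphabet:
`σ <_KB τ` iff `σ` properly extends `τ`, or at the first position where they differ the
entry of `σ` is `r`-below that of `τ`. -/
def KBLt {α : Type*} (r : α → α → Prop) (σ τ : List α) : Prop :=
  (τ <+: σ ∧ σ ≠ τ) ∨
    ∃ (i : ℕ) (h1 : i < σ.length) (h2 : i < τ.length),
      σ.take i = τ.take i ∧ r (σ.get ⟨i, h1⟩) (τ.get ⟨i, h2⟩)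

/-- The linear order of type ω on `List ℕ × ℕ`, transported from `ℕ` along the canonical
denumerable encoding. -/
def encLt (a b : List ℕ × ℕ) : Prop :=
  Encodable.encode a < Encodable.encode b

/-- The tree `T^∞` over the alphabet `List ℕ × ℕ`: finite sequences
`⟨(σ₀,n₀), …, (σₖ,nₖ)⟩` with `σ₀ ≠ []`, each `σⱼ ∈ T`, and each `σⱼ` a proper prefix of
`σⱼ₊₁` (the `nⱼ` arbitrary). -/
def inftyTree (T : Set (List ℕ)) : Set (List (List ℕ × ℕ)) :=
  {l | (∀ p ∈ l, p.1 ∈ T ∧ p.1 ≠ []) ∧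
       l.Chain' (fun p q => p.1 <+: q.1 ∧ p.1 ≠ q.1)}

/-! ### Generic Kleene–Brouwer lemmas -/

lemma kb_irrefl {α : Type*} {r : α → α → Prop} (hirr : ∀ a, ¬ r a a) (σ : List α) :
    ¬ KBLt r σ σ := by
  rintro (⟨_, hne⟩ | ⟨i, h1, h2, _, hr⟩)
  · exact hne rfl
  · exact hirr _ hr

lemma getElem_eq_of_take_eq {α : Type*} {σ τ : List α} {i j : ℕ}
    (h : σ.take j = τ.take j) (hij : i < j) (h1 : i < σ.length) (h2 : i < τ.length) :
    σ[i] = τ[i] := by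
  have := congrArg (fun l => l[i]?) h
  simpa [List.getElem?_take, hij, List.getElem?_eq_getElem, h1, h2] using this

lemma kb_asymm {α : Type*} {r : α → α → Prop} (hirr : ∀ a, ¬ r a a)
    (hasym : ∀ a b, r a b → ¬ r b a) {σ τ : List α}
    (h : KBLt r σ τ) (h' : KBLt r τ σ) : False := by
  rcases h with (⟨hp, hne⟩ | ⟨i, h1, h2, heq, hr⟩) <;>
    rcases h' with (⟨hp', hne'⟩ | ⟨j, g1, g2, geq, gr⟩)
  · exact hne (hp'.eq_of_length (le_antisymm hp'.length_le hp.length_le))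
  · have : τ[j] = σ[j] := hp.getElem g1
    rw [List.get_eq_getElem, List.get_eq_getElem, this] at gr
    exact hirr _ gr
  · have : σ[i] = τ[i] := hp'.getElem h1
    rw [List.get_eq_getElem, List.get_eq_getElem, this] at hr
    exact hirr _ hr
  · rcases lt_trichotomy i j with hij | rfl | hji
    · have : τ[i] = σ[i] := getElem_eq_of_take_eq geq hij h2 h1
      rw [List.get_eq_getElem, List.get_eq_getElem, ← this] at hr
      exact hirr _ hr
    · exact hasym _ _ hr (by simpa using gr)
    · have : σ[j] = τ[j] := getElem_eq_of_take_eq heq hji g2 g1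
      rw [List.get_eq_getElem, List.get_eq_getElem, this] at gr
      exact hirr _ gr

lemma kb_total {α : Type*} {r : α → α → Prop}
    (htot : ∀ a b : α, a ≠ b → r a b ∨ r b a) {σ τ : List α} (hne : σ ≠ τ) :
    KBLt r σ τ ∨ KBLt r τ σ := by
  set n := min σ.length τ.length with hn
  by_cases H : ∀ i, (h : i < n) → σ[i]'(lt_of_lt_of_le h (min_le_left _ _)) =
      τ[i]'(lt_of_lt_of_le h (min_le_right _ _))
  · have htake : σ.take n = τ.take n := by
      apply List.ext_getElem <;> simp [hn]
      intro i hi hi' _ _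
      exact H i (by omega)
    rcases le_total σ.length τ.length with hl | hl
    · have : σ <+: τ := by
        have : σ = τ.take n := by rw [← htake, hn, min_eq_left hl, List.take_length]
        rw [this]; exact List.take_prefix _ _
      exact Or.inr (Or.inl ⟨this, fun h => hne h.symm⟩)
    · have : τ <+: σ := by
        have : τ = σ.take n := by rw [htake, hn, min_eq_right hl, List.take_length]
        rw [this]; exact List.take_prefix _ _
      exact Or.inl (Or.inl ⟨this, hne⟩)
  · push_neg at H
    have Hex : ∃ i, ∃ (h : i < n), σ[i]'(lt_of_lt_of_le h (min_le_left _ _)) ≠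
        τ[i]'(lt_of_lt_of_le h (min_le_right _ _)) := H
    classical
    let i := Nat.find Hex
    obtain ⟨hi, hne'⟩ := Nat.find_spec Hex
    have hi1 : i < σ.length := lt_of_lt_of_le hi (min_le_left _ _)
    have hi2 : i < τ.length := lt_of_lt_of_le hi (min_le_right _ _)
    have htake : σ.take i = τ.take i := by
      apply List.ext_getElem
      · simp; omega
      · intro j hj hj'
        simp only [List.getElem_take]
        have hjlt : j < i := by simp at hj; omega
        by_contra hc
        exact Nat.find_min Hex hjlt ⟨by omega, hc⟩
    rcases htot _ _ hne' with hr | hr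
    · exact Or.inl (Or.inr ⟨i, hi1, hi2, htake, hr⟩)
    · exact Or.inr (Or.inr ⟨i, hi2, hi1, htake.symm, hr⟩)

/-! ### The encoding machinery and the map `fmap` -/

lemma exists_enc_gt (p : List ℕ) (m : ℕ) : ∃ n : ℕ, m < Encodable.encode (p, n) := by
  by_contra h
  push_neg at h
  have hinj : Function.Injective
      (fun n : ℕ => (⟨Encodable.encode (p, n), Nat.lt_succ_of_le (h n)⟩ : Fin (m + 1))) := by
    intro a b hab
    have : Encodable.encode (p, a) = Encodable.encode (p, b) := congrArg Fin.val hab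
    have := Encodable.encode_injective this
    simpa using this
  obtain ⟨a, b, hne, heq⟩ := Finite.exists_ne_map_eq_of_infinite
    (fun n : ℕ => (⟨Encodable.encode (p, n), Nat.lt_succ_of_le (h n)⟩ : Fin (m + 1)))
  exact hne (hinj heq)

noncomputable def Gfun (stem : List ℕ) : ℕ → ℕ
  | 0 => 0
  | k + 1 => (exists_enc_gt (stem ++ [k + 1])
      (Encodable.encode (stem ++ [k], Gfun stem k))).choose

noncomputable def Efun (stem : List ℕ) (k : ℕ) : ℕ :=
  Encodable.encode (stem ++ [k], Gfun stem k)

lemma Efun_strictMono (stem : List ℕ) : StrictMono (Efun stem) :=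
  strictMono_nat_of_lt_succ fun k => (exists_enc_gt (stem ++ [k + 1])
      (Encodable.encode (stem ++ [k], Gfun stem k))).choose_spec

noncomputable def tag (l : List ℕ) : List ℕ × ℕ :=
  (l, Gfun l.dropLast (l.getLastD 0))

lemma tag_concat (s : List ℕ) (a : ℕ) : tag (s ++ [a]) = (s ++ [a], Gfun s a) := by
  simp [tag, List.dropLast_concat, List.getLastD_concat]

lemma tag_lt (s : List ℕ) {a b : ℕ} (hab : a < b) :
    encLt (tag (s ++ [a])) (tag (s ++ [b])) := by
  rw [tag_concat, tag_concat]
  exact Efun_strictMono s hab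

noncomputable def fmap (σ : List ℕ) : List (List ℕ × ℕ) :=
  (List.range σ.length).map fun j => tag (σ.take (j + 1))

@[simp] lemma fmap_length (σ : List ℕ) : (fmap σ).length = σ.length := by simp [fmap]

@[simp] lemma fmap_nil : fmap [] = [] := by simp [fmap]

lemma fmap_getElem (σ : List ℕ) (j : ℕ) (hj : j < (fmap σ).length) :
    (fmap σ)[j] = tag (σ.take (j + 1)) := by
  simp [fmap] at hj ⊢

lemma fmap_take (σ τ : List ℕ) (h : σ <+: τ) : fmap σ = (fmap τ).take σ.length := by
  have hlen := h.length_le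
  apply List.ext_getElem
  · simp; omega
  · intro j hj hj'
    simp only [fmap_length] at hj
    rw [fmap_getElem _ _ (by simpa using hj), List.getElem_take,
      fmap_getElem _ _ (by simp; omega)]
    congr 1
    rw [List.prefix_iff_eq_take.mp h, List.take_take]
    congr 1
    omega

lemma fmap_prefix {σ τ : List ℕ} (h : σ <+: τ) : fmap σ <+: fmap τ := by
  rw [fmap_take σ τ h]; exact List.take_prefix _ _

lemma fmap_injective : Function.Injective fmap := by
  intro σ τ h
  have hlen : σ.length = τ.length := by
    have := congrArg List.length h; simpa using this
  rcases Nat.eq_zero_or_pos σ.length with h0 | h0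
  · rw [List.length_eq_zero_iff.mp h0, List.length_eq_zero_iff.mp (hlen.symm.trans h0)]
  · have h1 : σ.length - 1 < (fmap σ).length := by simp; omega
    have h2 : σ.length - 1 < (fmap τ).length := by simp; omega
    have := congrArg (fun l => l[σ.length - 1]?) h
    simp only [List.getElem?_eq_getElem, h1, h2] at this
    rw [fmap_getElem _ _ h1, fmap_getElem _ _ h2] at this
    have h3 : σ.length - 1 + 1 = σ.length := by omega
    have h4 := congrArg Prod.fst (Option.some.inj this)
    simp only [tag] at h4
    have h5 : σ.take (σ.length - 1 + 1) = τ.take (σ.length - 1 + 1) := h4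
    rw [h3, List.take_length, hlen, List.take_length] at h5
    exact h5

/-! ### Tops of nodes of `T^∞` -/

lemma pp_length {α : Type*} {p q : List α} (h : p <+: q) (hne : p ≠ q) :
    p.length < q.length :=
  lt_of_le_of_ne h.length_le (fun hl => hne (h.eq_of_length hl))

lemma pp_trans {α : Type*} {p q r : List α} (h1 : p <+: q ∧ p ≠ q) (h2 : q <+: r ∧ q ≠ r) :
    p <+: r ∧ p ≠ r := by
  refine ⟨h1.1.trans h2.1, fun he => ?_⟩
  have := pp_length h1.1 h1.2
  have := pp_length h2.1 h2.2
  subst he; omega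

def top (l : List (List ℕ × ℕ)) : List ℕ := (l.getLastD ([], 0)).1

@[simp] lemma top_nil : top [] = [] := rfl

lemma top_concat (l : List (List ℕ × ℕ)) (x : List ℕ × ℕ) : top (l ++ [x]) = x.1 := by
  simp [top, List.getLastD_concat]

lemma top_of_ne_nil (l : List (List ℕ × ℕ)) (h : l ≠ []) : top l = (l.getLast h).1 := by
  simp [top, List.getLastD_eq_getLast?, List.getLast?_eq_getLast h]

lemma top_mem {T : Set (List ℕ)} (hT : IsTree T) {l : List (List ℕ × ℕ)}
    (hl : l ∈ inftyTree T) : top l ∈ T := by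
  rcases eq_or_ne l [] with rfl | hne
  · simpa using hT.1
  · rw [top_of_ne_nil l hne]
    exact (hl.1 _ (List.getLast_mem hne)).1

lemma append_mem {T : Set (List ℕ)} {l : List (List ℕ × ℕ)} (hl : l ∈ inftyTree T)
    {q : List ℕ} (hq : q ∈ T) (hpre : top l <+: q) (hne : top l ≠ q) (n : ℕ) :
    l ++ [(q, n)] ∈ inftyTree T := by
  have hqne : q ≠ [] := by
    rintro rfl
    exact hne (List.prefix_nil.mp hpre)
  constructor
  · intro p hp
    rcases List.mem_append.mp hp with hp | hp
    · exact hl.1 p hp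
    · simp at hp; subst hp; exact ⟨hq, hqne⟩
  · show List.IsChain _ _
    rw [List.isChain_append]
    refine ⟨hl.2, List.isChain_singleton _, ?_⟩
    intro x hx y hy
    simp at hy; subst hy
    have hlne : l ≠ [] := by rintro rfl; simp at hx
    rw [List.getLast?_eq_getLast hlne] at hx
    simp at hx; subst hx
    rw [← top_of_ne_nil l hlne]
    exact ⟨hpre, hne⟩

lemma top_ext {T : Set (List ℕ)} {l l' : List (List ℕ × ℕ)}
    (hl : l ∈ inftyTree T) (hl' : l' ∈ inftyTree T)
    (hpre : l <+: l') (hne : l ≠ l') : top l <+: top l' ∧ top l ≠ top l' := by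
  have hlen : l.length < l'.length := pp_length hpre hne
  have hl'ne : l' ≠ [] := by rintro rfl; simp at hlen
  rcases eq_or_ne l [] with rfl | hlne
  · rw [top_of_ne_nil l' hl'ne]
    have h1 := (hl'.1 _ (List.getLast_mem hl'ne)).2
    exact ⟨List.nil_prefix, fun h => h1 h.symm⟩
  · haveI : IsTrans (List ℕ × ℕ) (fun p q => p.1 <+: q.1 ∧ p.1 ≠ q.1) :=
      ⟨fun _ _ _ => pp_trans⟩
    have hpw := List.isChain_iff_pairwise.mp hl'.2
    rw [List.pairwise_iff_getElem] at hpw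
    have hi : l.length - 1 < l'.length := by omega
    have hj : l'.length - 1 < l'.length := by omega
    have hlpos : 0 < l.length := List.length_pos_iff.mpr hlne
    have hrel := hpw (l.length - 1) (l'.length - 1) hi hj (by omega)
    have e1 : l'[l.length - 1] = l.getLast hlne := by
      rw [← hpre.getElem (by omega), List.getLast_eq_getElem]
    have e2 : l'[l'.length - 1] = l'.getLast hl'ne := (List.getLast_eq_getElem hl'ne).symm
    rw [e1, e2] at hrel
    rw [top_of_ne_nil l hlne, top_of_ne_nil l' hl'ne]
    exact hrel

lemma top_fmap (σ : List ℕ) : top (fmap σ) = σ := by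
  rcases eq_or_ne σ [] with rfl | hne
  · simp
  · have hpos : 0 < σ.length := List.length_pos_iff.mpr hne
    have hfne : fmap σ ≠ [] := by
      intro h
      have h0 := congrArg List.length h
      rw [fmap_length] at h0
      exact hne (List.length_eq_zero_iff.mp (by simpa using h0))
    have hfl : (fmap σ).length = σ.length := fmap_length σ
    rw [top_of_ne_nil _ hfne, List.getLast_eq_getElem,
      fmap_getElem _ _ (by omega)]
    have h3 : (fmap σ).length - 1 + 1 = σ.length := by omega
    simp only [tag, h3, List.take_length]

lemma fmap_mem {T : Set (List ℕ)} (hT : IsTree T) {σ : List ℕ} (hσ : σ ∈ T) :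
    fmap σ ∈ inftyTree T := by
  constructor
  · intro p hp
    simp only [fmap, List.mem_map, List.mem_range] at hp
    obtain ⟨j, hj, rfl⟩ := hp
    refine ⟨hT.2 (List.take_prefix _ _) hσ, ?_⟩
    intro h
    have : (σ.take (j + 1)).length = j + 1 := by simp; omega
    rw [show (tag (σ.take (j+1))).1 = σ.take (j+1) from rfl] at h
    rw [h] at this
    simp at this
  · show List.IsChain _ _
    rw [List.isChain_iff_getElem]
    intro i h
    simp only [fmap_length] at h
    rw [fmap_getElem _ _ (by simp; omega), fmap_getElem _ _ (by simp; omega)]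
    constructor
    · show σ.take (i + 1) <+: σ.take (i + 2)
      rw [show σ.take (i+1) = (σ.take (i+2)).take (i+1) by rw [List.take_take]; congr 1; omega]
      exact List.take_prefix _ _
    · show σ.take (i + 1) ≠ σ.take (i + 2)
      intro hc
      have := congrArg List.length hc
      simp at this
      omega

/-! ### Rank lemmas -/

lemma treeRank_eq {α : Type*} (T : Set (List α)) (hwf : WellFounded (extRel T)) (σ : T) :
    treeRank T hwf σ = ⨆ τ : {τ // extRel T τ σ}, Order.succ (treeRank T hwf τ.val) := by
  letI : IsWellFounded T (extRel T) := ⟨hwf⟩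
  exact IsWellFounded.rank_eq (extRel T) σ

lemma treeRank_lt_of_rel {α : Type*} {T : Set (List α)} (hwf : WellFounded (extRel T))
    {σ τ : T} (h : extRel T τ σ) : treeRank T hwf τ < treeRank T hwf σ := by
  letI : IsWellFounded T (extRel T) := ⟨hwf⟩
  exact IsWellFounded.rank_lt_of_rel h

lemma infRank_ge (T : Set (List ℕ)) (hT : IsTree T) (hTwf : WellFounded (extRel T))
    (hIwf : WellFounded (extRel (inftyTree T))) :
    ∀ σ : T, ∀ l : inftyTree T, top l.val = σ.val →
      treeRank T hTwf σ ≤ treeRank (inftyTree T) hIwf l := by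
  intro σ
  induction σ using hTwf.induction with
  | _ σ IH =>
    intro l htop
    rw [treeRank_eq]
    apply Ordinal.iSup_le
    intro τ
    rw [Order.succ_le_iff]
    have hmem : l.val ++ [(τ.1.val, 0)] ∈ inftyTree T :=
      append_mem l.2 τ.1.2 (htop ▸ τ.2.1) (htop ▸ τ.2.2) 0
    have h1 : treeRank T hTwf τ.1 ≤ treeRank (inftyTree T) hIwf ⟨l.val ++ [(τ.1.val, 0)], hmem⟩ :=
      IH τ.1 τ.2 ⟨l.val ++ [(τ.1.val, 0)], hmem⟩ (top_concat _ _)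
    have h2 : treeRank (inftyTree T) hIwf ⟨l.val ++ [(τ.1.val, 0)], hmem⟩ <
        treeRank (inftyTree T) hIwf l := by
      apply treeRank_lt_of_rel
      refine ⟨List.prefix_append _ _, ?_⟩
      intro hc
      have := congrArg List.length hc
      simp at this
    exact lt_of_le_of_lt h1 h2

lemma infRank_le (T : Set (List ℕ)) (hT : IsTree T) (hTwf : WellFounded (extRel T))
    (hIwf : WellFounded (extRel (inftyTree T))) :
    ∀ l : inftyTree T,
      treeRank (inftyTree T) hIwf l ≤ treeRank T hTwf ⟨top l.val, top_mem hT l.2⟩ := by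
  intro l
  induction l using hIwf.induction with
  | _ l IH =>
    rw [treeRank_eq]
    apply Ordinal.iSup_le
    intro l'
    rw [Order.succ_le_iff]
    have h0 := top_ext l.2 l'.1.2 l'.2.1 l'.2.2
    exact lt_of_le_of_lt (IH l'.1 l'.2)
      (treeRank_lt_of_rel hTwf (σ := ⟨top l.val, top_mem hT l.2⟩)
        (τ := ⟨top l'.1.val, top_mem hT l'.1.2⟩) ⟨h0.1, h0.2⟩)

/-! ### No infinite path -/

lemma noInfPath {T : Set (List ℕ)} (hT : IsTree T) (hwf : ¬ HasInfPath T) :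
    ¬ HasInfPath (inftyTree T) := by
  rintro ⟨f, hf⟩
  apply hwf
  have hmemT : ∀ j : ℕ, (f j).1 ∈ T ∧ (f j).1 ≠ [] := by
    intro j
    exact (hf (j + 1)).1 (f j) (by simp; exact ⟨j, le_refl j, rfl⟩)
  have hchain : ∀ j : ℕ, (f j).1 <+: (f (j + 1)).1 ∧ (f j).1 ≠ (f (j + 1)).1 := by
    intro j
    have h2 := (hf (j + 2)).2
    change List.IsChain _ _ at h2
    rw [List.isChain_iff_getElem] at h2
    have h := h2 j (by simp)
    simpa using h
  have hlen : ∀ j : ℕ, j < (f j).1.length := by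
    intro j
    induction j with
    | zero => exact List.length_pos_iff.mpr (hmemT 0).2
    | succ j ih =>
      have := pp_length (hchain j).1 (hchain j).2
      omega
  have hpre : ∀ j k : ℕ, j ≤ k → (f j).1 <+: (f k).1 := by
    intro j k hjk
    induction k, hjk using Nat.le_induction with
    | base => exact List.prefix_refl _
    | succ k hjk ih => exact ih.trans (hchain k).1
  refine ⟨fun n => (f n).1.getD n 0, ?_⟩
  intro k
  have hkey : (List.range k).map (fun n => (f n).1.getD n 0) = (f k).1.take k := by
    apply List.ext_getElem
    · have := hlen k
      simp
      omega
    · intro i h1 h2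
      simp only [List.getElem_map, List.getElem_range, List.getElem_take]
      have hik : i < k := by simpa using h1
      have hi : i < (f i).1.length := hlen i
      rw [List.getD_eq_getElem _ _ hi]
      exact (hpre i k hik.le).getElem hi
  rw [hkey]
  exact hT.2 (List.take_prefix _ _) (hmemT k).1

/-! ### KB preservation -/

lemma fmap_kb {σ τ : List ℕ} (h : KBLt (· < ·) σ τ) : KBLt encLt (fmap σ) (fmap τ) := by
  rcases h with ⟨hp, hne⟩ | ⟨i, h1, h2, htake, hr⟩
  · exact Or.inl ⟨fmap_prefix hp, fun he => hne (fmap_injective he)⟩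
  · refine Or.inr ⟨i, by simpa using h1, by simpa using h2, ?_, ?_⟩
    · apply List.ext_getElem
      · simp; omega
      · intro j hj hj'
        have hji : j < i := by simp at hj; omega
        rw [List.getElem_take, List.getElem_take,
          fmap_getElem _ _ (by simp; omega), fmap_getElem _ _ (by simp; omega)]
        congr 1
        rw [show σ.take (j+1) = (σ.take i).take (j+1) by rw [List.take_take]; congr 1; omega,
          show τ.take (j+1) = (τ.take i).take (j+1) by rw [List.take_take]; congr 1; omega,
          htake]
    · rw [List.get_eq_getElem, List.get_eq_getElem,
        fmap_getElem _ _ (by simpa using h1), fmap_getElem _ _ (by simpa using h2)]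
      have e1 : σ.take (i + 1) = σ.take i ++ [σ[i]'h1] := by
        rw [List.take_succ, List.getElem?_eq_getElem h1]
        rfl
      have e2 : τ.take (i + 1) = σ.take i ++ [τ[i]'h2] := by
        rw [List.take_succ, List.getElem?_eq_getElem h2, htake]
        rfl
      rw [e1, e2]
      exact tag_lt _ (by simpa using hr)

/-! ### Main theorem -/

theorem statement5 (T : Set (List ℕ)) (hT : IsTree T) (hwf : ¬ HasInfPath T) :
    ¬ HasInfPath (inftyTree T) ∧
    ∀ (hTwf : WellFounded (extRel T)) (hIwf : WellFounded (extRel (inftyTree T))),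
      treeRank (inftyTree T) hIwf ⟨[], by simp [inftyTree]; exact List.IsChain.nil⟩ =
        treeRank T hTwf ⟨[], hT.1⟩ ∧
      ∃ f : T → (inftyTree T : Set (List (List ℕ × ℕ))),
        Function.Injective f ∧
        (f ⟨[], hT.1⟩).val = [] ∧
        (∀ σ : T, (f σ).val.length = σ.val.length) ∧
        (∀ σ τ : T, σ.val <+: τ.val → σ.val ≠ τ.val →
          (f σ).val <+: (f τ).val ∧ (f σ).val ≠ (f τ).val) ∧
        (∀ σ : T, treeRank (inftyTree T) hIwf (f σ) = treeRank T hTwf σ) ∧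
        (∀ σ τ : T, KBLt (· < ·) σ.val τ.val → KBLt encLt (f σ).val (f τ).val) ∧
        Nonempty ((fun a b : T => KBLt (· < ·) a.val b.val) ↪r
                  (fun a b : inftyTree T => KBLt encLt a.val b.val)) := by
  have hencirr : ∀ a : List ℕ × ℕ, ¬ encLt a a := fun a => lt_irrefl _
  have hencasym : ∀ a b : List ℕ × ℕ, encLt a b → ¬ encLt b a := fun a b h h' => by
    exact absurd h' (not_lt.mpr h.le)
  refine ⟨noInfPath hT hwf, fun hTwf hIwf => ⟨?_, ?_⟩⟩
  · apply le_antisymm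
    · exact infRank_le T hT hTwf hIwf ⟨[], by simp [inftyTree]; exact List.IsChain.nil⟩
    · exact infRank_ge T hT hTwf hIwf ⟨[], hT.1⟩ ⟨[], by simp [inftyTree]; exact List.IsChain.nil⟩ rfl
  · set F : T → (inftyTree T : Set (List (List ℕ × ℕ))) :=
      fun σ => ⟨fmap σ.val, fmap_mem hT σ.2⟩ with hF
    have hFinj : Function.Injective F := by
      intro a b h
      exact Subtype.ext (fmap_injective (congrArg Subtype.val h))
    refine ⟨F, hFinj, ?_, ?_, ?_, ?_, ?_, ?_⟩
    · simp [hF]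
    · intro σ; simp [hF]
    · intro σ τ h hne
      refine ⟨fmap_prefix h, fun he => hne ?_⟩
      exact congrArg Subtype.val (hFinj (Subtype.ext he))
    · intro σ
      apply le_antisymm
      · have h := infRank_le T hT hTwf hIwf (F σ)
        have he : (⟨top (F σ).val, top_mem hT (F σ).2⟩ : T) = σ :=
          Subtype.ext (top_fmap σ.val)
        rwa [he] at h
      · exact infRank_ge T hT hTwf hIwf σ (F σ) (top_fmap σ.val)
    · intro σ τ h
      exact fmap_kb h
    · refine ⟨⟨⟨F, hFinj⟩, ?_⟩⟩
      intro a b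
      constructor
      · intro h
        rcases eq_or_ne a b with rfl | hne
        · exact absurd h (kb_irrefl hencirr _)
        · rcases kb_total (r := ((· < ·) : ℕ → ℕ → Prop))
            (fun x y hxy => hxy.lt_or_gt) (fun he => hne (Subtype.ext he)) with h' | h'
          · exact h'
          · exact absurd (fmap_kb h') (fun hk => kb_asymm hencirr hencasym h hk)
      · exact fmap_kb
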